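/- Let f(ξ) = ξ/(1−ξ) for ξ < 1 and +∞ otherwise. The perspective of f is f̃(x,η) = ηx/(η−x) if η > 0 and x < η, ι_{(-∞,0]}(x) if η = 0, and +∞ otherwise; moreover the closure of dom f̃ is {(x,η) ∈ ℝ² : η ≥ 0 and x ≤ η}, and the projection onto this set is given by P(x,η) = (min{0,x},0) if η ≤ 0 and x ≤ −η; ((x+η)/2,(x+η)/2) if |η| ≤ x; and (x,η) otherwise. -/

import Mathlib

open scoped Classical
open Filter Set Topology

noncomputable section

/-- `f` is proper, convex and lower semicontinuous (the class `Γ₀`). -/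
def Gamma0 {E : Type*} [NormedAddCommGroup E] [NormedSpace ℝ E] (f : E → EReal) : Prop :=
  (∃ x, f x ≠ ⊤) ∧ (∀ x, f x ≠ ⊥) ∧
  (∀ x y : E, ∀ a b : ℝ, 0 ≤ a → 0 ≤ b → a + b = 1 →
    f (a • x + b • y) ≤ (a : EReal) * f x + (b : EReal) * f y) ∧
  LowerSemicontinuous f

/-- recession function of `f` with base point `x0 ∈ dom f`:
`(rec f)(x) = lim_{t→∞} (f(x0+tx)-f(x0))/t`, which by convexity equals the supremum. -/
def recFn {E : Type*} [NormedAddCommGroup E] [NormedSpace ℝ E]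
    (f : E → EReal) (x0 : E) (x : E) : EReal :=
  ⨆ t ∈ Set.Ioi (0 : ℝ), (f (x0 + t • x) - f x0) * ((t⁻¹ : ℝ) : EReal)

/-- the perspective function of `f` (recession with base point `x0 ∈ dom f`). -/
def persp {E : Type*} [NormedAddCommGroup E] [NormedSpace ℝ E]
    (f : E → EReal) (x0 : E) (p : E × ℝ) : EReal :=
  if 0 < p.2 then (p.2 : EReal) * f (p.2⁻¹ • p.1)
  else if p.2 = 0 then recFn f x0 p.1 else ⊤

/-- Fenchel conjugate. -/
def conj {E : Type*} [NormedAddCommGroup E] [InnerProductSpace ℝ E]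
    (f : E → EReal) (u : E) : EReal :=
  ⨆ x, ((inner ℝ x u : ℝ) : EReal) - f x

/-- Fenchel conjugate on `ℝ`. -/
def conjR (f : ℝ → EReal) (u : ℝ) : EReal := ⨆ x : ℝ, ((x * u : ℝ) : EReal) - f x

/-- Fenchel conjugate on `E × ℝ` (with the Hilbert direct sum inner product). -/
def conj2 {E : Type*} [NormedAddCommGroup E] [InnerProductSpace ℝ E]
    (g : E × ℝ → EReal) (q : E × ℝ) : EReal :=
  ⨆ p : E × ℝ, (((inner ℝ p.1 q.1 : ℝ) + p.2 * q.2 : ℝ) : EReal) - g p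

/-- indicator function of a set. -/
def indE {E : Type*} (C : Set E) (x : E) : EReal := if x ∈ C then 0 else ⊤

/-- support function of a set. -/
def suppFn {E : Type*} [NormedAddCommGroup E] [InnerProductSpace ℝ E]
    (C : Set E) (x : E) : EReal := ⨆ u ∈ C, ((inner ℝ u x : ℝ) : EReal)

/-- epigraph of an extended-real-valued function. -/
def epi {E : Type*} (f : E → EReal) : Set (E × ℝ) := {p | f p.1 ≤ (p.2 : EReal)}

/-- epigraph of the perspective of `f`, as a subset of `E × ℝ × ℝ`. -/
def epiPersp {E : Type*} [NormedAddCommGroup E] [NormedSpace ℝ E]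
    (f : E → EReal) (x0 : E) : Set (E × ℝ × ℝ) :=
  {p | persp f x0 (p.1, p.2.1) ≤ (p.2.2 : EReal)}

/-- `p` is the metric projection of `z` onto `C ⊆ E`. -/
def IsProjE {E : Type*} [NormedAddCommGroup E] (C : Set E) (z p : E) : Prop :=
  p ∈ C ∧ ∀ q ∈ C, ‖z - p‖ ≤ ‖z - q‖

/-- `p` is the metric projection of `z` onto `C ⊆ E ⊕ ℝ` (Hilbert direct sum distance). -/
def IsProj2 {E : Type*} [NormedAddCommGroup E] (C : Set (E × ℝ)) (z p : E × ℝ) : Prop :=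
  p ∈ C ∧ ∀ q ∈ C,
    ‖z.1 - p.1‖ ^ 2 + (z.2 - p.2) ^ 2 ≤ ‖z.1 - q.1‖ ^ 2 + (z.2 - q.2) ^ 2

/-- `p` is the metric projection of `z` onto `C ⊆ E ⊕ ℝ ⊕ ℝ` (Hilbert direct sum distance). -/
def IsProj3 {E : Type*} [NormedAddCommGroup E] (C : Set (E × ℝ × ℝ)) (z p : E × ℝ × ℝ) : Prop :=
  p ∈ C ∧ ∀ q ∈ C,
    ‖z.1 - p.1‖ ^ 2 + (z.2.1 - p.2.1) ^ 2 + (z.2.2 - p.2.2) ^ 2 ≤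
      ‖z.1 - q.1‖ ^ 2 + (z.2.1 - q.2.1) ^ 2 + (z.2.2 - q.2.2) ^ 2

/-- `p = prox_{γ g}(z)` on `E`. -/
def IsProxE {E : Type*} [NormedAddCommGroup E] (g : E → EReal) (γ : ℝ) (z p : E) : Prop :=
  ∀ y, g p + ((‖z - p‖ ^ 2 / (2 * γ) : ℝ) : EReal) ≤ g y + ((‖z - y‖ ^ 2 / (2 * γ) : ℝ) : EReal)

/-- `p = prox_{γ g}(z)` on `E ⊕ ℝ` (Hilbert direct sum distance). -/
def IsProx2 {E : Type*} [NormedAddCommGroup E] (g : E × ℝ → EReal) (γ : ℝ)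
    (z p : E × ℝ) : Prop :=
  ∀ y, g p + (((‖z.1 - p.1‖ ^ 2 + (z.2 - p.2) ^ 2) / (2 * γ) : ℝ) : EReal) ≤
    g y + (((‖z.1 - y.1‖ ^ 2 + (z.2 - y.2) ^ 2) / (2 * γ) : ℝ) : EReal)

/-- subdifferential of `f` at `x`. -/
def subdiff {E : Type*} [NormedAddCommGroup E] [InnerProductSpace ℝ E]
    (f : E → EReal) (x : E) : Set E :=
  {u | ∀ y, ((inner ℝ (y - x) u : ℝ) : EReal) + f x ≤ f y}

/-- the hyperbolic penalty `ξ ↦ ξ/(1-ξ)` for `ξ < 1`, `+∞` otherwise. -/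
def fhyp (ξ : ℝ) : EReal := if ξ < 1 then ((ξ / (1 - ξ) : ℝ) : EReal) else ⊤

lemma fhyp_zero : fhyp 0 = 0 := by
  simp [fhyp]

lemma recFn_pos {x : ℝ} (hx : 0 < x) : recFn fhyp 0 x = ⊤ := by
  rw [recFn, eq_top_iff]
  have hx' : x⁻¹ ∈ Set.Ioi (0:ℝ) := by simpa using inv_pos.mpr hx
  refine le_trans ?_ (le_iSup₂ (f := fun t (_ : t ∈ Set.Ioi (0:ℝ)) =>
    (fhyp (0 + t • x) - fhyp 0) * ((t⁻¹:ℝ):EReal)) x⁻¹ hx')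
  have h1 : (0:ℝ) + x⁻¹ • x = 1 := by rw [zero_add, smul_eq_mul, inv_mul_cancel₀ hx.ne']
  rw [h1]
  have h2 : fhyp 1 = ⊤ := by simp [fhyp]
  rw [h2, fhyp_zero, sub_zero, inv_inv, EReal.top_mul_of_pos (by exact_mod_cast hx)]

lemma recFn_nonpos {x : ℝ} (hx : x ≤ 0) : recFn fhyp 0 x = 0 := by
  have key : ∀ t ∈ Set.Ioi (0:ℝ), (fhyp (0 + t • x) - fhyp 0) * ((t⁻¹:ℝ):EReal)
      = ((x / (1 - t*x) : ℝ) : EReal) := by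
    intro t ht
    have ht' : (0:ℝ) < t := ht
    have htx : t * x ≤ 0 := mul_nonpos_of_nonneg_of_nonpos ht'.le hx
    have h1 : fhyp (0 + t • x) = ((t*x/(1-t*x) : ℝ) : EReal) := by
      rw [zero_add, smul_eq_mul, fhyp, if_pos (by linarith)]
    rw [h1, fhyp_zero, sub_zero, ← EReal.coe_mul]
    congr 1
    rw [div_mul_eq_mul_div, mul_right_comm, mul_inv_cancel₀ ht'.ne', one_mul]
  rw [recFn]
  apply le_antisymm
  · refine iSup₂_le fun t ht => ?_
    rw [key t ht]
    have ht' : (0:ℝ) < t := ht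
    have h2 : x / (1 - t*x) ≤ 0 := by
      apply div_nonpos_of_nonpos_of_nonneg hx
      nlinarith
    exact_mod_cast h2
  · rcases eq_or_lt_of_le hx with h0 | hneg
    · refine le_trans ?_ (le_iSup₂ (f := fun t (_ : t ∈ Set.Ioi (0:ℝ)) =>
        (fhyp (0 + t • x) - fhyp 0) * ((t⁻¹:ℝ):EReal)) 1 (by simp))
      rw [key 1 (by simp), h0]
      norm_num
    · by_contra hcon
      push_neg at hcon
      obtain ⟨b', hb1, hb2⟩ := EReal.exists_between_coe_real hcon
      have hb'neg : b' < 0 := by exact_mod_cast hb2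
      set t : ℝ := (1 + x/b')/(-x) with htdef
      have hxb : 0 < x / b' := div_pos_of_neg_of_neg hneg hb'neg
      have ht : (0:ℝ) < t := by
        apply div_pos (by linarith) (by linarith)
      have hx0 : x ≠ 0 := hneg.ne
      have hb0 : b' ≠ 0 := hb'neg.ne
      have htx : 1 - t*x = 2 + x/b' := by
        rw [htdef]
        field_simp
        ring
      have hxx : b' * (x / b') = x := by field_simp
      have hval : b' ≤ x / (1 - t*x) := by
        rw [htx, le_div_iff₀ (by linarith)]
        nlinarith [hxx]
      have hle : ((x / (1 - t*x) : ℝ) : EReal) ≤ ⨆ s ∈ Set.Ioi (0:ℝ),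
          (fhyp (0 + s • x) - fhyp 0) * ((s⁻¹:ℝ):EReal) := by
        rw [← key t ht]
        exact le_iSup₂ (f := fun s (_ : s ∈ Set.Ioi (0:ℝ)) =>
          (fhyp (0 + s • x) - fhyp 0) * ((s⁻¹:ℝ):EReal)) t ht
      have hfin : ((b':ℝ):EReal) ≤ ⨆ s ∈ Set.Ioi (0:ℝ),
          (fhyp (0 + s • x) - fhyp 0) * ((s⁻¹:ℝ):EReal) :=
        le_trans (by exact_mod_cast hval) hle
      exact absurd hb1 (not_lt.mpr hfin)

lemma persp_fhyp (x η : ℝ) : persp fhyp 0 (x, η) =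
    (if 0 < η ∧ x < η then ((η * x / (η - x) : ℝ) : EReal)
      else if η = 0 ∧ x ≤ 0 then (0 : EReal) else ⊤) := by
  rcases lt_trichotomy η 0 with hη | hη | hη
  · rw [persp, if_neg (by simp only; linarith), if_neg (by simp only; linarith),
      if_neg (by rintro ⟨h,_⟩; linarith), if_neg (by rintro ⟨h,_⟩; linarith)]
  · subst hη
    rw [persp, if_neg (by simp), if_pos rfl, if_neg (by rintro ⟨h,_⟩; exact lt_irrefl _ h)]
    by_cases hx : x ≤ 0
    · rw [if_pos ⟨rfl, hx⟩]
      exact recFn_nonpos hx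
    · rw [if_neg (by rintro ⟨_,h⟩; exact hx h)]
      exact recFn_pos (lt_of_not_ge hx)
  · rw [persp, if_pos hη]
    by_cases hxη : x < η
    · rw [if_pos ⟨hη, hxη⟩]
      have harg : η⁻¹ • x < 1 := by
        rw [smul_eq_mul, inv_mul_eq_div, div_lt_one hη]
        exact hxη
      rw [show fhyp (η⁻¹ • x) = (((η⁻¹ * x) / (1 - η⁻¹ * x) : ℝ) : EReal) by
        rw [fhyp, if_pos harg]; rfl]
      rw [← EReal.coe_mul]
      congr 1
      have hη0 : η ≠ 0 := hη.ne'
      field_simp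
    · rw [if_neg (by rintro ⟨_,h⟩; exact hxη h), if_neg (by rintro ⟨h,_⟩; exact hη.ne' h)]
      have harg : ¬ η⁻¹ • x < 1 := by
        rw [smul_eq_mul, inv_mul_eq_div, div_lt_one hη]
        exact hxη
      rw [show fhyp (η⁻¹ • x) = ⊤ by rw [fhyp, if_neg harg]]
      exact EReal.mul_top_of_pos (by exact_mod_cast hη)

lemma dom_persp_eq : {p : ℝ × ℝ | persp fhyp 0 p ≠ ⊤}
    = {p : ℝ × ℝ | (0 < p.2 ∧ p.1 < p.2) ∨ (p.2 = 0 ∧ p.1 ≤ 0)} := by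
  ext ⟨x, η⟩
  simp only [Set.mem_setOf_eq, persp_fhyp x η]
  split_ifs with h1 h2
  · simpa using Or.inl h1
  · simpa using Or.inr h2
  · simp only [ne_eq, not_true_eq_false, false_iff]
    tauto

theorem stmt16 :
    (∀ x η : ℝ, persp fhyp 0 (x, η) =
      (if 0 < η ∧ x < η then ((η * x / (η - x) : ℝ) : EReal)
        else if η = 0 ∧ x ≤ 0 then (0 : EReal) else ⊤)) ∧
    closure {p : ℝ × ℝ | persp fhyp 0 p ≠ ⊤} = {p : ℝ × ℝ | 0 ≤ p.2 ∧ p.1 ≤ p.2} ∧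
    ∀ x η : ℝ, IsProj2 {p : ℝ × ℝ | 0 ≤ p.2 ∧ p.1 ≤ p.2} (x, η)
      (if η ≤ 0 ∧ x ≤ -η then (min 0 x, 0)
        else if |η| ≤ x then ((x + η) / 2, (x + η) / 2) else (x, η)) := by
  refine ⟨fun x η => persp_fhyp x η, ?_, ?_⟩
  · rw [dom_persp_eq]
    apply Subset.antisymm
    · apply closure_minimal
      · rintro ⟨x, η⟩ (⟨h1, h2⟩ | ⟨h1, h2⟩) <;> exact ⟨by simp only at *; linarith, by simp only at *; linarith⟩
      · exact (isClosed_le continuous_const continuous_snd).inter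
          (isClosed_le continuous_fst continuous_snd)
    · rintro ⟨x, η⟩ ⟨h1, h2⟩
      simp only at h1 h2
      have h : Tendsto (fun n : ℕ => 1 / ((n : ℝ) + 1)) atTop (𝓝 0) := tendsto_one_div_add_atTop_nhds_zero_nat
      have hA : Tendsto (fun n : ℕ => x - 1/(n+1)) atTop (𝓝 x) := by
        simpa using tendsto_const_nhds.sub h
      have hB : Tendsto (fun n : ℕ => η + 1/(n+1)) atTop (𝓝 η) := by
        simpa using tendsto_const_nhds.add h
      refine mem_closure_of_tendsto (hA.prodMk_nhds hB) (Eventually.of_forall fun n => ?_)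
      have hn : (0:ℝ) < 1/(n+1) := by positivity
      exact Or.inl ⟨by simp only; linarith, by simp only; linarith⟩
  · intro x η
    split_ifs with hc1 hc2
    · obtain ⟨hη, hx⟩ := hc1
      constructor
      · exact ⟨le_refl 0, min_le_left 0 x⟩
      · rintro ⟨q1, q2⟩ ⟨hq2, hq12⟩
        simp only [Real.norm_eq_abs, sq_abs] at *
        rcases le_or_gt x 0 with hx0 | hx0
        · rw [min_eq_right hx0]
          nlinarith [sq_nonneg (x - q1), mul_nonneg (neg_nonneg.mpr hη) hq2]
        · rw [min_eq_left hx0.le]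
          nlinarith [sq_nonneg (q1 - q2), mul_nonneg hx0.le (sub_nonneg.mpr hq12),
            mul_nonneg (by linarith : 0 ≤ -(x + η)) hq2, sq_nonneg q1, sq_nonneg q2]
    · have hxη : -η ≤ x := (neg_le_abs η).trans hc2
      have hηx : η ≤ x := (le_abs_self η).trans hc2
      constructor
      · exact ⟨by simp only; linarith, le_refl _⟩
      · rintro ⟨q1, q2⟩ ⟨hq2, hq12⟩
        simp only [Real.norm_eq_abs, sq_abs] at *
        nlinarith [sq_nonneg (q1 - q2), sq_nonneg (q1 + q2 - x - η),
          mul_nonneg (by linarith : (0:ℝ) ≤ x - η) (sub_nonneg.mpr hq12)]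
    · push_neg at hc1 hc2
      have hmem : (0:ℝ) ≤ η ∧ x ≤ η := by
        rcases le_or_gt η 0 with h | h
        · rw [abs_of_nonpos h] at hc2
          exact absurd hc2 (not_lt.mpr (hc1 h).le)
        · rw [abs_of_pos h] at hc2
          exact ⟨h.le, hc2.le⟩
      refine ⟨hmem, ?_⟩
      rintro ⟨q1, q2⟩ ⟨hq2, hq12⟩
      simp only [Real.norm_eq_abs, sq_abs]
      nlinarith [sq_nonneg (x - q1), sq_nonneg (η - q2)]
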